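/- Let B = (V₁ ∪ V₂, E) be a bipartite graph and a, t positive integers. If |N_B(X)| ≥ 2t|X| for every X ⊆ V₁ with 1 ≤ |X| ≤ 2a, then B is (t, ta)-nonblocking: there exists a family S of subsets of E containing ∅, closed under taking subsets, and such that for every E' ∈ S with |E'| < ta and every v ∈ V₁ incident to fewer than t edges of E', there is an edge e = (v, w) ∈ E \ E' with E' ∪ {e} ∈ S and w not incident to any edge of E'. -/

import Mathlib

section FFPAux

variable {V₁ V₂ : Type*}

/-- Neighbourhood of a set `X ⊆ V₁`. -/
def ffpNb (Adj : V₁ → V₂ → Prop) (X : Set V₁) : Set V₂ := {w : V₂ | ∃ v ∈ X, Adj v w}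

/-- The set of used right endpoints of a state `E'`. -/
def ffpW (E' : Set (V₁ × V₂)) : Set V₂ := Prod.snd '' E'

/-- The number of edges of `E'` with left endpoint in `X`. -/
noncomputable def ffpC (E' : Set (V₁ × V₂)) (X : Set V₁) : ℕ := {p ∈ E' | p.1 ∈ X}.ncard

lemma ffpNb_mono (Adj : V₁ → V₂ → Prop) {X Y : Set V₁} (h : X ⊆ Y) :
    ffpNb Adj X ⊆ ffpNb Adj Y := by
  rintro w ⟨v, hv, hadj⟩; exact ⟨v, h hv, hadj⟩

lemma ffpNb_union (Adj : V₁ → V₂ → Prop) (X Y : Set V₁) :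
    ffpNb Adj (X ∪ Y) = ffpNb Adj X ∪ ffpNb Adj Y := by
  ext w; simp only [ffpNb, Set.mem_setOf_eq, Set.mem_union]
  constructor
  · rintro ⟨v, hv | hv, hadj⟩
    · exact Or.inl ⟨v, hv, hadj⟩
    · exact Or.inr ⟨v, hv, hadj⟩
  · rintro (⟨v, hv, hadj⟩ | ⟨v, hv, hadj⟩)
    · exact ⟨v, Or.inl hv, hadj⟩
    · exact ⟨v, Or.inr hv, hadj⟩

end FFPAux

/-- Feldman–Friedman–Pippenger: if in a bipartite graph `B = (V₁ ∪ V₂, E)` (given by the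
adjacency relation `Adj`) every set `X ⊆ V₁` with `1 ≤ |X| ≤ 2a` satisfies
`|N_B(X)| ≥ 2t|X|`, then `B` is `(t, ta)`-nonblocking: there is a family `S` of subsets
of `E` (the safe states) containing `∅`, closed under subsets, such that any safe state
`E'` with `|E'| < ta` can be extended at any vertex `v ∈ V₁` of `E'`-degree `< t` by an
edge `(v, w)` whose endpoint `w` is not used by `E'`, staying safe. -/
theorem feldman_friedman_pippenger {V₁ V₂ : Type*} [Fintype V₁] [Fintype V₂]
    (Adj : V₁ → V₂ → Prop) (a t : ℕ) (ha : 0 < a) (ht : 0 < t)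
    (hexp : ∀ X : Set V₁, X.Nonempty → X.ncard ≤ 2 * a →
      2 * t * X.ncard ≤ ({w : V₂ | ∃ v ∈ X, Adj v w}).ncard) :
    ∃ S : Set (Set (V₁ × V₂)),
      (∀ E' ∈ S, ∀ p ∈ E', Adj (Prod.fst p) (Prod.snd p)) ∧
      (∅ : Set (V₁ × V₂)) ∈ S ∧
      (∀ E' ∈ S, ∀ E'' ⊆ E', E'' ∈ S) ∧
      (∀ E' ∈ S, E'.ncard < t * a → ∀ v : V₁,
        ({p ∈ E' | Prod.fst p = v}).ncard < t →
        ∃ w : V₂, Adj v w ∧ (v, w) ∉ E' ∧ E' ∪ {(v, w)} ∈ S ∧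
          ∀ p ∈ E', Prod.snd p ≠ w) := by
  classical
  -- the family of safe states
  refine ⟨{E' | (∀ p ∈ E', Adj p.1 p.2) ∧ Set.InjOn Prod.snd E' ∧
      ∀ X : Set V₁, X.Nonempty → X.ncard ≤ 2 * a →
        t * X.ncard ≤ (ffpNb Adj X \ ffpW E').ncard + ffpC E' X}, ?_, ?_, ?_, ?_⟩
  · -- all states consist of edges
    exact fun E' hE' p hp => hE'.1 p hp
  · -- the empty state is safe
    refine ⟨by simp, by simp [Set.InjOn], fun X hX hX2a => ?_⟩
    have h1 : ffpW (∅ : Set (V₁ × V₂)) = ∅ := by simp [ffpW]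
    have h2 : ffpC (∅ : Set (V₁ × V₂)) X = 0 := by simp [ffpC]
    have := hexp X hX hX2a
    have hNb : ffpNb Adj X = {w : V₂ | ∃ v ∈ X, Adj v w} := rfl
    rw [h1, h2, Set.diff_empty, hNb]
    nlinarith [this]
  · -- closed under subsets
    rintro E' ⟨hadj, hinj, hinv⟩ E'' hsub
    refine ⟨fun p hp => hadj p (hsub hp), hinj.mono hsub, fun X hX hX2a => ?_⟩
    -- the removed edges with left endpoint in X give new unused neighbours
    set D : Set (V₁ × V₂) := {p ∈ E' | p ∉ E'' ∧ p.1 ∈ X} with hD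
    have hsplit : {p ∈ E' | p.1 ∈ X} = {p ∈ E'' | p.1 ∈ X} ∪ D := by
      ext p
      simp only [Set.mem_setOf_eq, Set.mem_union, hD]
      constructor
      · rintro ⟨hpE, hpX⟩
        by_cases h : p ∈ E''
        · exact Or.inl ⟨h, hpX⟩
        · exact Or.inr ⟨hpE, h, hpX⟩
      · rintro (⟨h1, h2⟩ | ⟨h1, h2, h3⟩)
        · exact ⟨hsub h1, h2⟩
        · exact ⟨h1, h3⟩
    have hdisjD : Disjoint {p ∈ E'' | p.1 ∈ X} D := by
      rw [Set.disjoint_left]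
      rintro p ⟨hp, _⟩ ⟨_, hp', _⟩
      exact hp' hp
    have hCsplit : ffpC E' X = ffpC E'' X + D.ncard := by
      rw [ffpC, hsplit, Set.ncard_union_eq hdisjD (Set.toFinite _) (Set.toFinite _)]
      rfl
    -- the image of D under snd is disjoint from both ffpW E'' and (Nb X \ ffpW E')
    have himg : (ffpNb Adj X \ ffpW E') ∪ Prod.snd '' D ⊆ ffpNb Adj X \ ffpW E'' := by
      rintro w (⟨hw1, hw2⟩ | ⟨p, ⟨hpE, hpE'', hpX⟩, rfl⟩)
      · refine ⟨hw1, fun hw'' => hw2 ?_⟩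
        obtain ⟨q, hq, hq2⟩ := hw''
        exact ⟨q, hsub hq, hq2⟩
      · refine ⟨⟨p.1, hpX, hadj p hpE⟩, fun hw'' => ?_⟩
        obtain ⟨q, hq, hq2⟩ := hw''
        exact hpE'' (hinj (hsub hq) hpE hq2 ▸ hq)
    have hdisj2 : Disjoint (ffpNb Adj X \ ffpW E') (Prod.snd '' D) := by
      rw [Set.disjoint_left]
      rintro w ⟨_, hw2⟩ ⟨p, ⟨hpE, _, _⟩, rfl⟩
      exact hw2 ⟨p, hpE, rfl⟩
    have hDcard : (Prod.snd '' D).ncard = D.ncard :=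
      Set.ncard_image_of_injOn (hinj.mono (fun p hp => hp.1))
    have hle : (ffpNb Adj X \ ffpW E').ncard + D.ncard ≤ (ffpNb Adj X \ ffpW E'').ncard := by
      rw [← hDcard, ← Set.ncard_union_eq hdisj2 (Set.toFinite _) (Set.toFinite _)]
      exact Set.ncard_le_ncard himg (Set.toFinite _)
    have := hinv X hX hX2a
    omega
  · -- extension property
    rintro E' ⟨hadj, hinj, hinv⟩ hEcard v hv
    have hWle : (ffpW E').ncard ≤ E'.ncard := Set.ncard_image_le (Set.toFinite _)
    have hCv : ffpC E' {v} = ({p ∈ E' | p.1 = v}).ncard := by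
      unfold ffpC
      congr 1
    -- #1: tight sets are small
    have hL4 : ∀ X : Set V₁, X.Nonempty → X.ncard ≤ 2 * a →
        (ffpNb Adj X \ ffpW E').ncard + ffpC E' X ≤ t * X.ncard → X.ncard < a := by
      intro X hX hX2a htight
      have h1 := hexp X hX hX2a
      have h2 : ffpNb Adj X ⊆ (ffpNb Adj X \ ffpW E') ∪ ffpW E' := by
        intro w hw
        by_cases h : w ∈ ffpW E'
        · exact Or.inr h
        · exact Or.inl ⟨hw, h⟩
      have h3 : (ffpNb Adj X).ncard ≤ (ffpNb Adj X \ ffpW E').ncard + (ffpW E').ncard :=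
        le_trans (Set.ncard_le_ncard h2 (Set.toFinite _)) (Set.ncard_union_le _ _)
      have hNb : ffpNb Adj X = {w : V₂ | ∃ v ∈ X, Adj v w} := rfl
      rw [← hNb] at h1
      have h4 : t * X.ncard < t * a := by nlinarith
      exact Nat.lt_of_mul_lt_mul_left h4
    -- #2: "tightness" bound is closed under unions of small sets
    have hsub : ∀ X Y : Set V₁, X.ncard < a → Y.ncard < a →
        (ffpNb Adj X \ ffpW E').ncard + ffpC E' X ≤ t * X.ncard →
        (ffpNb Adj Y \ ffpW E').ncard + ffpC E' Y ≤ t * Y.ncard →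
        (ffpNb Adj (X ∪ Y) \ ffpW E').ncard + ffpC E' (X ∪ Y) ≤ t * (X ∪ Y).ncard := by
      intro X Y hXa hYa hXt hYt
      -- lower bound for the intersection
      have hint : t * (X ∩ Y).ncard ≤
          ((ffpNb Adj X \ ffpW E') ∩ (ffpNb Adj Y \ ffpW E')).ncard + ffpC E' (X ∩ Y) := by
        rcases Set.eq_empty_or_nonempty (X ∩ Y) with h | h
        · simp [h]
        · have h2a : (X ∩ Y).ncard ≤ 2 * a := by
            have := Set.ncard_le_ncard (Set.inter_subset_left (s := X) (t := Y)) (Set.toFinite _)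
            omega
          refine le_trans (hinv (X ∩ Y) h h2a) ?_
          have hsubN : ffpNb Adj (X ∩ Y) \ ffpW E' ⊆
              (ffpNb Adj X \ ffpW E') ∩ (ffpNb Adj Y \ ffpW E') := by
            rintro w ⟨hw, hw2⟩
            exact ⟨⟨ffpNb_mono Adj (Set.inter_subset_left) hw, hw2⟩,
              ⟨ffpNb_mono Adj (Set.inter_subset_right) hw, hw2⟩⟩
          exact Nat.add_le_add_right (Set.ncard_le_ncard hsubN (Set.toFinite _)) _
      -- inclusion-exclusion for neighbourhoods
      have hNbIE : (ffpNb Adj (X ∪ Y) \ ffpW E').ncard +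
          ((ffpNb Adj X \ ffpW E') ∩ (ffpNb Adj Y \ ffpW E')).ncard =
          (ffpNb Adj X \ ffpW E').ncard + (ffpNb Adj Y \ ffpW E').ncard := by
        rw [ffpNb_union, Set.union_diff_distrib]
        exact Set.ncard_union_add_ncard_inter _ _ (Set.toFinite _) (Set.toFinite _)
      -- inclusion-exclusion for edge counts
      have hCIE : ffpC E' (X ∪ Y) + ffpC E' (X ∩ Y) = ffpC E' X + ffpC E' Y := by
        unfold ffpC
        have hU : {p ∈ E' | p.1 ∈ X ∪ Y} = {p ∈ E' | p.1 ∈ X} ∪ {p ∈ E' | p.1 ∈ Y} := by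
          ext p; simp only [Set.mem_setOf_eq, Set.mem_union]; tauto
        have hI : {p ∈ E' | p.1 ∈ X ∩ Y} = {p ∈ E' | p.1 ∈ X} ∩ {p ∈ E' | p.1 ∈ Y} := by
          ext p; simp only [Set.mem_setOf_eq, Set.mem_inter_iff]; tauto
        rw [hU, hI]
        exact Set.ncard_union_add_ncard_inter _ _ (Set.toFinite _) (Set.toFinite _)
      -- inclusion-exclusion for cardinalities of X, Y
      have hXYIE : (X ∪ Y).ncard + (X ∩ Y).ncard = X.ncard + Y.ncard :=
        Set.ncard_union_add_ncard_inter _ _ (Set.toFinite _) (Set.toFinite _)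
      nlinarith [hint, hNbIE, hCIE, hXYIE]
    -- the family of "tight or empty" sets avoiding v
    set F : Set (Set V₁) := {X | v ∉ X ∧ X.ncard < a ∧
        (ffpNb Adj X \ ffpW E').ncard + ffpC E' X ≤ t * X.ncard} with hF
    have hemptyF : (∅ : Set V₁) ∈ F := by
      refine ⟨Set.notMem_empty v, by simpa using ha, ?_⟩
      simp [ffpNb, ffpC]
    obtain ⟨U, hUF, hUmax⟩ := Set.Finite.exists_maximalFor Set.ncard F (Set.toFinite _)
      ⟨∅, hemptyF⟩
    -- every tight set avoiding v is contained in U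
    have hUabs : ∀ X : Set V₁, X.Nonempty → v ∉ X → X.ncard ≤ 2 * a →
        (ffpNb Adj X \ ffpW E').ncard + ffpC E' X ≤ t * X.ncard → X ⊆ U := by
      intro X hX hvX hX2a htight
      have hXa : X.ncard < a := hL4 X hX hX2a htight
      have hZt := hsub X U hXa hUF.2.1 htight hUF.2.2
      have hZ2a : (X ∪ U).ncard ≤ 2 * a := by
        have h1 := Set.ncard_union_le X U
        have h2 := hUF.2.1
        omega
      have hZa : (X ∪ U).ncard < a :=
        hL4 (X ∪ U) (hX.mono Set.subset_union_left) hZ2a hZt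
      have hZF : X ∪ U ∈ F := by
        refine ⟨?_, hZa, hZt⟩
        rintro (h | h)
        · exact hvX h
        · exact hUF.1 h
      have hle : U.ncard ≤ (X ∪ U).ncard :=
        Set.ncard_le_ncard Set.subset_union_right (Set.toFinite _)
      have heq := hUmax (j := X ∪ U) hZF hle
      have : X ∪ U = U := by
        refine (Set.eq_of_subset_of_ncard_le Set.subset_union_right ?_ (Set.toFinite _)).symm
        omega
      rw [← this]
      exact Set.subset_union_left
    -- there is a good vertex w
    have hgood : ∃ w : V₂, Adj v w ∧ w ∉ ffpW E' ∧
        ∀ X : Set V₁, X.Nonempty → v ∉ X → X.ncard ≤ 2 * a →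
          (ffpNb Adj X \ ffpW E').ncard + ffpC E' X ≤ t * X.ncard → w ∉ ffpNb Adj X := by
      by_contra hbad
      push_neg at hbad
      -- every available neighbour of v is in Nb U
      have hcover : ffpNb Adj {v} \ ffpW E' ⊆ ffpNb Adj U \ ffpW E' := by
        rintro w ⟨hw, hw2⟩
        obtain ⟨u, hu, hadj'⟩ := hw
        rw [Set.mem_singleton_iff] at hu; subst hu
        obtain ⟨X, hX1, hX2, hX3, hX4, hX5⟩ := hbad w hadj' hw2
        exact ⟨ffpNb_mono Adj (hUabs X hX1 hX2 hX3 hX4) hX5, hw2⟩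
      -- invariant at U ∪ {v} gives a contradiction
      have hvU : v ∉ U := hUF.1
      have hins : (insert v U).ncard = U.ncard + 1 :=
        Set.ncard_insert_of_notMem hvU (Set.toFinite _)
      have hins2a : (insert v U).ncard ≤ 2 * a := by
        have := hUF.2.1; omega
      have hinvins := hinv (insert v U) ⟨v, Set.mem_insert _ _⟩ hins2a
      have hNbins : ffpNb Adj (insert v U) \ ffpW E' ⊆ ffpNb Adj U \ ffpW E' := by
        rintro w ⟨hw, hw2⟩
        obtain ⟨u, hu, hadj'⟩ := hw
        rcases hu with rfl | hu
        · exact hcover ⟨⟨u, rfl, hadj'⟩, hw2⟩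
        · exact ⟨⟨u, hu, hadj'⟩, hw2⟩
      have hNbcard : (ffpNb Adj (insert v U) \ ffpW E').ncard ≤
          (ffpNb Adj U \ ffpW E').ncard := Set.ncard_le_ncard hNbins (Set.toFinite _)
      have hCins : ffpC E' (insert v U) = ffpC E' U + ffpC E' {v} := by
        unfold ffpC
        have hsplit : {p ∈ E' | p.1 ∈ insert v U} = {p ∈ E' | p.1 ∈ U} ∪ {p ∈ E' | p.1 ∈ ({v} : Set V₁)} := by
          ext p
          simp only [Set.mem_setOf_eq, Set.mem_insert_iff, Set.mem_union, Set.mem_singleton_iff]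
          tauto
        rw [hsplit, Set.ncard_union_eq ?_ (Set.toFinite _) (Set.toFinite _)]
        rw [Set.disjoint_left]
        rintro p ⟨_, hp⟩ ⟨_, hp'⟩
        rw [Set.mem_singleton_iff] at hp'
        exact hvU (hp' ▸ hp)
      have hUbound := hUF.2.2
      rw [hins, hCins] at hinvins
      have hmul : t * (U.ncard + 1) = t * U.ncard + t := by ring
      rw [hmul] at hinvins
      have hvn : ffpC E' {v} < t := by rw [hCv]; exact hv
      omega
    obtain ⟨w, hadjw, hwW, hwgood⟩ := hgood
    have hvwE : (v, w) ∉ E' := fun h => hwW ⟨(v, w), h, rfl⟩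
    refine ⟨w, hadjw, hvwE, ⟨?_, ?_, ?_⟩, fun p hp hpw => hwW ⟨p, hp, hpw⟩⟩
    · rintro p (hp | hp)
      · exact hadj p hp
      · rw [Set.mem_singleton_iff] at hp; subst hp; exact hadjw
    · rintro p hp q hq hpq
      rcases hp with hp | hp <;> rcases hq with hq | hq
      · exact hinj hp hq hpq
      · rw [Set.mem_singleton_iff] at hq; subst hq
        exact absurd ⟨p, hp, hpq⟩ hwW
      · rw [Set.mem_singleton_iff] at hp; subst hp
        exact absurd ⟨q, hq, hpq.symm⟩ hwW
      · rw [Set.mem_singleton_iff] at hp hq; rw [hp, hq]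
    · intro X hX hX2a
      have hold := hinv X hX hX2a
      have hWnew : ffpW (E' ∪ {(v, w)}) = insert w (ffpW E') := by
        unfold ffpW
        rw [Set.image_union]
        simp [Set.union_comm]
      have hNbnew : ffpNb Adj X \ ffpW E' ⊆
          insert w (ffpNb Adj X \ ffpW (E' ∪ {(v, w)})) := by
        rintro u ⟨hu, hu2⟩
        by_cases h : u = w
        · exact Or.inl h
        · refine Or.inr ⟨hu, ?_⟩
          rw [hWnew]
          rintro (h' | h')
          · exact h h'
          · exact hu2 h'
      have hNbcard : (ffpNb Adj X \ ffpW E').ncard ≤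
          (ffpNb Adj X \ ffpW (E' ∪ {(v, w)})).ncard + 1 := by
        refine le_trans (Set.ncard_le_ncard hNbnew (Set.toFinite _)) ?_
        exact le_trans (Set.ncard_insert_le _ _) (by omega)
      by_cases hvX : v ∈ X
      · -- v ∈ X : edge count increases by one
        have hCnew : ffpC (E' ∪ {(v, w)}) X = ffpC E' X + 1 := by
          unfold ffpC
          have hsplit : {p ∈ E' ∪ {(v, w)} | p.1 ∈ X} = insert (v, w) {p ∈ E' | p.1 ∈ X} := by
            ext p
            simp only [Set.mem_setOf_eq, Set.mem_union, Set.mem_singleton_iff,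
              Set.mem_insert_iff]
            constructor
            · rintro ⟨hp | hp, hpX⟩
              · exact Or.inr ⟨hp, hpX⟩
              · exact Or.inl hp
            · rintro (rfl | ⟨hp, hpX⟩)
              · exact ⟨Or.inr rfl, hvX⟩
              · exact ⟨Or.inl hp, hpX⟩
          rw [hsplit, Set.ncard_insert_of_notMem (fun h => hvwE h.1) (Set.toFinite _)]
        rw [hCnew]
        omega
      · -- v ∉ X : edge count unchanged
        have hCnew : ffpC (E' ∪ {(v, w)}) X = ffpC E' X := by
          unfold ffpC
          congr 1
          ext p
          simp only [Set.mem_setOf_eq, Set.mem_union, Set.mem_singleton_iff]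
          constructor
          · rintro ⟨hp | hp, hpX⟩
            · exact ⟨hp, hpX⟩
            · subst hp; exact absurd hpX hvX
          · rintro ⟨hp, hpX⟩
            exact ⟨Or.inl hp, hpX⟩
        rw [hCnew]
        by_cases hwX : w ∈ ffpNb Adj X
        · -- X is not tight
          have hnt : ¬ ((ffpNb Adj X \ ffpW E').ncard + ffpC E' X ≤ t * X.ncard) :=
            fun h => hwgood X hX hvX hX2a h hwX
          omega
        · -- w ∉ Nb X : nothing changes
          have heq : ffpNb Adj X \ ffpW (E' ∪ {(v, w)}) = ffpNb Adj X \ ffpW E' := by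
            rw [hWnew]
            ext u
            simp only [Set.mem_diff, Set.mem_insert_iff]
            constructor
            · rintro ⟨hu, hu2⟩
              exact ⟨hu, fun h => hu2 (Or.inr h)⟩
            · rintro ⟨hu, hu2⟩
              refine ⟨hu, ?_⟩
              rintro (rfl | h)
              · exact hwX hu
              · exact hu2 h
          rw [heq]
          omega
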